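/- Let g, h be elements of the graph product G(Γ) such that term(g) ∩ init(h) = ∅. Then Π(gh) = Π(g)Π(h), i.e., for each i ∈ {1,…,D} the i-th string of Π(gh) is the concatenation of the i-th string of Π(g) followed by the i-th string of Π(h). -/

import Mathlib

open MeasureTheory ProbabilityTheory
open scoped Classical ENNReal

namespace GraphProductDrift

variable {D : ℕ}

/-- The commutation relators of a graph product. -/
def Rels (Γ : SimpleGraph (Fin D)) (G : Fin D → Type*) [∀ i, Group (G i)] :
    Set (Monoid.CoprodI G) :=
  { x | ∃ (i j : Fin D) (g : G i) (h : G j), Γ.Adj i j ∧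
      x = Monoid.CoprodI.of g * Monoid.CoprodI.of h *
        (Monoid.CoprodI.of g)⁻¹ * (Monoid.CoprodI.of h)⁻¹ }

/-- The graph product of the family of groups `G` over the graph `Γ`. -/
abbrev GP (Γ : SimpleGraph (Fin D)) (G : Fin D → Type*) [∀ i, Group (G i)] : Type _ :=
  Monoid.CoprodI G ⧸ Subgroup.normalClosure (Rels Γ G)

/-- The canonical map from a vertex group to the graph product. -/
def of (Γ : SimpleGraph (Fin D)) {G : Fin D → Type*} [∀ i, Group (G i)] (i : Fin D) :
    G i →* GP Γ G :=
  (QuotientGroup.mk' _).comp Monoid.CoprodI.of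

/-- The image in the graph product of a word in the alphabet `⊔ᵢ Gᵢ`. -/
def prodOfWord (Γ : SimpleGraph (Fin D)) {G : Fin D → Type*} [∀ i, Group (G i)]
    (u : List (Σ i, G i)) : GP Γ G :=
  (u.map fun l => of Γ l.1 l.2).prod

/-- A piling: a list of `D` strings, the `i`-th string over the alphabet
`{0} ⊔ (Gᵢ ∖ {e})`, where `none` plays the role of `0`. -/
abbrev PilingT (G : Fin D → Type*) : Type _ := ∀ i : Fin D, List (Option (G i))

/-- Replace the `i`-th string of a piling. -/
def setAt {G : Fin D → Type*} (P : PilingT G) (i : Fin D) (l : List (Option (G i))) :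
    PilingT G :=
  fun j => if h : j = i then h ▸ l else P j

/-- Append a single letter `g ∈ Gᵢ` to a piling, following Crisp–Godelle–Wiest. -/
noncomputable def appendLetter (Γ : SimpleGraph (Fin D)) {G : Fin D → Type*} [∀ i, Group (G i)]
    (P : PilingT G) (i : Fin D) (g : G i) : PilingT G :=
  match (P i).getLast? with
  | some (some g') =>
      if g' * g = 1 then
        fun j => if j = i ∨ (j ≠ i ∧ ¬ Γ.Adj i j) then (P j).dropLast else P j
      else
        setAt P i ((P i).dropLast ++ [some (g' * g)])
  | _ =>
      setAt (fun j => if j ≠ i ∧ ¬ Γ.Adj i j then P j ++ [none] else P j) i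
        (P i ++ [some g])

/-- The piling of a word in the alphabet `⊔ᵢ (Gᵢ ∖ {e})`. -/
noncomputable def pilingOfWord (Γ : SimpleGraph (Fin D)) {G : Fin D → Type*} [∀ i, Group (G i)]
    (u : List (Σ i, G i)) : PilingT G :=
  u.foldl (fun P l => appendLetter Γ P l.1 l.2) (fun _ => [])

/-- The terminal clique of a piling: vertices whose string ends in a
nontrivial group element. -/
def termClique {G : Fin D → Type*} [∀ i, Group (G i)] (P : PilingT G) : Set (Fin D) :=
  { i | ∃ g : G i, g ≠ 1 ∧ (P i).getLast? = some (some g) }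

/-- The initial clique of a piling: vertices whose string starts with a
nontrivial group element. -/
def initClique {G : Fin D → Type*} [∀ i, Group (G i)] (P : PilingT G) : Set (Fin D) :=
  { i | ∃ g : G i, g ≠ 1 ∧ (P i).head? = some (some g) }

/-- The syllable length of an element of a graph product. -/
noncomputable def syl (Γ : SimpleGraph (Fin D)) {G : Fin D → Type*} [∀ i, Group (G i)]
    (g : GP Γ G) : ℕ :=
  sInf { n | ∃ u : List (Σ i, G i), u.length = n ∧
    u.Chain' (fun a b => a.1 ≠ b.1) ∧ prodOfWord Γ u = g }

/-- One piling is a componentwise prefix of another. -/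
def PilingPrefix {G : Fin D → Type*} (P Q : PilingT G) : Prop :=
  ∀ i, (P i) <+: (Q i)

/-- The position of the sample path after `k` steps:
`Z_k = s₁w₁ ⋯ s_k w_k`. -/
def Zpath (Γ : SimpleGraph (Fin D)) {G : Fin D → Type*} [∀ i, Group (G i)]
    (s : ℕ → Σ i, G i) (w : ℕ → GP Γ G) (k : ℕ) : GP Γ G :=
  ((List.range k).map (fun m => of Γ (s m).1 (s m).2 * w m)).prod

/-- `k` is a pivotal time (`0`-indexed: this corresponds to the pivotal time `k+1`
in `1`-indexed notation) of the path `(s₁, w₁, …, sₙ, wₙ)`, with respect to the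
piling map `Π`. -/
def IsPivotal (Γ : SimpleGraph (Fin D)) {G : Fin D → Type*} [∀ i, Group (G i)]
    (Pi : GP Γ G → PilingT G) (s : ℕ → Σ i, G i) (w : ℕ → GP Γ G) (n k : ℕ) : Prop :=
  k < n ∧
  (∀ m, k < m → m ≤ n → PilingPrefix (Pi (Zpath Γ s w k * of Γ (s k).1 (s k).2))
      (Pi (Zpath Γ s w m))) ∧
  (∀ m, k < m → m < n → PilingPrefix (Pi (Zpath Γ s w k * of Γ (s k).1 (s k).2))
      (Pi (Zpath Γ s w m * of Γ (s m).1 (s m).2))) ∧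
  (s k).1 ∉ termClique (Pi (Zpath Γ s w k)) ∧
  termClique (Pi (Zpath Γ s w k * of Γ (s k).1 (s k).2)) ∩ initClique (Pi (w k)) = ∅

/-- The number of pivotal times of the path `(s₁, w₁, …, sₙ, wₙ)`. -/
noncomputable def numPivotal (Γ : SimpleGraph (Fin D)) {G : Fin D → Type*} [∀ i, Group (G i)]
    (Pi : GP Γ G → PilingT G) (s : ℕ → Σ i, G i) (w : ℕ → GP Γ G) (n : ℕ) : ℕ :=
  Set.ncard { k | IsPivotal Γ Pi s w n k }

/-- The maximum size of a clique in `Γ`. -/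
noncomputable def cliqueMax (Γ : SimpleGraph (Fin D)) : ℕ :=
  sSup { n | ∃ K : Set (Fin D), Γ.IsClique K ∧ K.ncard = n }

/-- The maximum size of the 1-neighbourhood of a clique in `Γ`. -/
noncomputable def cliqueNbhdMax (Γ : SimpleGraph (Fin D)) : ℕ :=
  sSup { n | ∃ K : Set (Fin D), Γ.IsClique K ∧
    (K ∪ { v | ∃ u ∈ K, Γ.Adj v u }).ncard = n }

/-- Word length with respect to a set `S` (and the inverses of its elements). -/
noncomputable def wordLength {H : Type*} [Group H] (S : Set H) (g : H) : ℕ :=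
  sInf { n | ∃ u : List H, u.length = n ∧ (∀ x ∈ u, x ∈ S ∨ x⁻¹ ∈ S) ∧ u.prod = g }

/-! ### Auxiliary development for Statement 3 -/

section Aux

variable {Γ : SimpleGraph (Fin D)} {G : Fin D → Type*} [∀ i, Group (G i)]

lemma setAt_self (P : PilingT G) (i : Fin D) (l : List (Option (G i))) :
    setAt P i l i = l := by simp [setAt]

lemma setAt_ne (P : PilingT G) {i j : Fin D} (l : List (Option (G i))) (h : j ≠ i) :
    setAt P i l j = P j := by simp [setAt, h]

lemma appendLetter_push {P : PilingT G} {i : Fin D} {g : G i}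
    (h : ∀ x : G i, (P i).getLast? ≠ some (some x)) :
    appendLetter Γ P i g =
      setAt (fun j => if j ≠ i ∧ ¬ Γ.Adj i j then P j ++ [none] else P j) i
        (P i ++ [some g]) := by
  unfold appendLetter
  split
  · next g' heq => exact absurd heq (h g')
  · rfl

lemma appendLetter_merge {P : PilingT G} {i : Fin D} {g g' : G i}
    (h : (P i).getLast? = some (some g')) (hne : g' * g ≠ 1) :
    appendLetter Γ P i g = setAt P i ((P i).dropLast ++ [some (g' * g)]) := by
  unfold appendLetter
  split
  · next g'' heq =>
    rw [h] at heq
    obtain rfl : g'' = g' := by injection heq with h1; injection h1 with h2; exact h2.symm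
    rw [if_neg hne]
  · next hne' => exact absurd h (hne' g')

lemma appendLetter_cancel {P : PilingT G} {i : Fin D} {g g' : G i}
    (h : (P i).getLast? = some (some g')) (he : g' * g = 1) :
    appendLetter Γ P i g =
      fun k => if k = i ∨ (k ≠ i ∧ ¬ Γ.Adj i k) then (P k).dropLast else P k := by
  unfold appendLetter
  split
  · next g'' heq =>
    rw [h] at heq
    obtain rfl : g'' = g' := by injection heq with h1; injection h1 with h2; exact h2.symm
    rw [if_pos he]
  · next hne' => exact absurd h (hne' g')

lemma appendLetter_cancel_apply {P : PilingT G} {i : Fin D} {g g' : G i}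
    (h : (P i).getLast? = some (some g')) (he : g' * g = 1) (k : Fin D) :
    appendLetter Γ P i g k =
      if k = i ∨ (k ≠ i ∧ ¬ Γ.Adj i k) then (P k).dropLast else P k := by
  rw [appendLetter_cancel h he]

lemma appendLetter_push_self {P : PilingT G} {i : Fin D} {g : G i}
    (h : ∀ x : G i, (P i).getLast? ≠ some (some x)) :
    appendLetter Γ P i g i = P i ++ [some g] := by
  rw [appendLetter_push h, setAt_self]

lemma appendLetter_push_ne {P : PilingT G} {i : Fin D} {g : G i}
    (h : ∀ x : G i, (P i).getLast? ≠ some (some x)) {k : Fin D} (hk : k ≠ i) :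
    appendLetter Γ P i g k = if ¬ Γ.Adj i k then P k ++ [none] else P k := by
  rw [appendLetter_push h, setAt_ne _ _ hk]
  by_cases hadj : Γ.Adj i k <;> simp [hk, hadj]

lemma appendLetter_merge_self {P : PilingT G} {i : Fin D} {g g' : G i}
    (h : (P i).getLast? = some (some g')) (hne : g' * g ≠ 1) :
    appendLetter Γ P i g i = (P i).dropLast ++ [some (g' * g)] := by
  rw [appendLetter_merge h hne, setAt_self]

lemma appendLetter_merge_ne {P : PilingT G} {i : Fin D} {g g' : G i}
    (h : (P i).getLast? = some (some g')) (hne : g' * g ≠ 1) {k : Fin D} (hk : k ≠ i) :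
    appendLetter Γ P i g k = P k := by
  rw [appendLetter_merge h hne, setAt_ne _ _ hk]

lemma pilingOfWord_nil : pilingOfWord Γ ([] : List (Σ i, G i)) = fun _ => [] := rfl

lemma pilingOfWord_concat (v : List (Σ i, G i)) (l : Σ i, G i) :
    pilingOfWord Γ (v ++ [l]) = appendLetter Γ (pilingOfWord Γ v) l.1 l.2 := by
  unfold pilingOfWord
  rw [List.foldl_append]
  rfl

lemma prodOfWord_append (u v : List (Σ i, G i)) :
    prodOfWord Γ (u ++ v) = prodOfWord Γ u * prodOfWord Γ v := by
  unfold prodOfWord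
  rw [List.map_append, List.prod_append]

lemma prodOfWord_concat (u : List (Σ i, G i)) (l : Σ i, G i) :
    prodOfWord Γ (u ++ [l]) = prodOfWord Γ u * of Γ l.1 l.2 := by
  rw [prodOfWord_append]
  simp [prodOfWord]

/-- Vertex group elements at adjacent vertices commute in the graph product. -/
lemma of_commute {i j : Fin D} (h : Γ.Adj i j) (g : G i) (g' : G j) :
    of Γ i g * of Γ j g' = of Γ j g' * of Γ i g := by
  have h1 : of Γ i g * of Γ j g' * (of Γ i g)⁻¹ * (of Γ j g')⁻¹ = 1 := by
    have heq : of Γ i g * of Γ j g' * (of Γ i g)⁻¹ * (of Γ j g')⁻¹ =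
        (QuotientGroup.mk' (Subgroup.normalClosure (Rels Γ G)))
          (Monoid.CoprodI.of g * Monoid.CoprodI.of g' * (Monoid.CoprodI.of g)⁻¹ *
            (Monoid.CoprodI.of g')⁻¹) := by
      simp [of, map_mul, map_inv]
    rw [heq, QuotientGroup.mk'_apply, QuotientGroup.eq_one_iff]
    exact Subgroup.subset_normalClosure ⟨i, j, g, g', h, rfl⟩
  have h2 : of Γ i g * of Γ j g' * (of Γ i g)⁻¹ = of Γ j g' := mul_inv_eq_one.mp h1
  exact mul_inv_eq_iff_eq_mul.mp h2

/-- A word is *pushy* if building its piling never merges or cancels: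
each letter is appended to a string whose last entry is not a nontrivial
group element. -/
def Pushy (Γ : SimpleGraph (Fin D)) {G : Fin D → Type*} [∀ i, Group (G i)]
    (v : List (Σ i, G i)) : Prop :=
  ∀ v₁ (l : Σ i, G i) v₂, v = v₁ ++ l :: v₂ →
    ∀ x : G l.1, (pilingOfWord Γ v₁ l.1).getLast? ≠ some (some x)

lemma pushy_nil : Pushy Γ ([] : List (Σ i, G i)) := by
  intro v₁ l v₂ h
  exact absurd h.symm (by simp)

lemma pushy_concat_iff {v : List (Σ i, G i)} {l : Σ i, G i} :
    Pushy Γ (v ++ [l]) ↔ Pushy Γ v ∧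
      ∀ x : G l.1, (pilingOfWord Γ v l.1).getLast? ≠ some (some x) := by
  constructor
  · intro H
    refine ⟨fun v₁ l' v₂ h => ?_, H v l List.nil rfl⟩
    exact H v₁ l' (v₂ ++ [l]) (by rw [h]; simp)
  · rintro ⟨H, hl⟩ v₁ l' v₂ h x
    rcases List.eq_nil_or_concat v₂ with rfl | ⟨v₂', y, rfl⟩
    · obtain ⟨rfl, h2⟩ := List.append_inj' h rfl
      obtain rfl : l = l' := by injection h2
      exact hl x
    · have h' : v ++ [l] = (v₁ ++ l' :: v₂') ++ [y] := by rw [h]; simp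
      obtain ⟨rfl, h2⟩ := List.append_inj' h' rfl
      exact H v₁ l' v₂' rfl x

/-- What the letter `l` contributes to the `k`-th string when pushed. -/
noncomputable def strOf (Γ : SimpleGraph (Fin D)) {G : Fin D → Type*} [∀ i, Group (G i)]
    (k : Fin D) (l : Σ i, G i) : Option (Option (G k)) :=
  if h : l.1 = k then some (some (h ▸ l.2)) else if Γ.Adj l.1 k then none else some none

lemma strOf_self (k : Fin D) (a : G k) : strOf Γ k ⟨k, a⟩ = some (some a) := by
  simp [strOf]

lemma strOf_adj {k m : Fin D} (hm : m ≠ k) (hadj : Γ.Adj m k) (a : G m) :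
    strOf Γ k ⟨m, a⟩ = none := by
  simp [strOf, hm, hadj]

lemma strOf_nonadj {k m : Fin D} (hm : m ≠ k) (hadj : ¬ Γ.Adj m k) (a : G m) :
    strOf Γ k ⟨m, a⟩ = some none := by
  simp [strOf, hm, hadj]

/-- The strings of the piling of a pushy word, concretely. -/
lemma pilingOfWord_eq_filterMap {v : List (Σ i, G i)} :
    Pushy Γ v → ∀ k, pilingOfWord Γ v k = v.filterMap (strOf Γ k) := by
  induction v using List.reverseRecOn with
  | nil => intro _ k; rfl
  | append_singleton w l ih =>
    intro hv k
    rw [pushy_concat_iff] at hv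
    obtain ⟨m, a⟩ := l
    rw [pilingOfWord_concat, List.filterMap_append, ← ih hv.1]
    by_cases hk : k = m
    · subst hk
      rw [appendLetter_push_self hv.2]
      simp [strOf_self]
    · rw [appendLetter_push_ne hv.2 hk]
      by_cases hadj : Γ.Adj m k
      · simp [strOf_adj (fun h => hk h.symm) hadj, hadj]
      · simp [strOf_nonadj (fun h => hk h.symm) hadj, hadj]

lemma dropLast_concat_of_getLast? {α : Type*} {l : List α} {x : α}
    (h : l.getLast? = some x) : l.dropLast ++ [x] = l :=
  List.dropLast_append_getLast? x h

/-- If the `j`-th string of a pushy piling ends in a nontrivial element, every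
string at a vertex not adjacent to (and distinct from) `j` ends in `0`. -/
lemma filterMap_getLast_none {j k : Fin D} (hk : k ≠ j) (hadj : ¬ Γ.Adj j k) :
    ∀ {v : List (Σ i, G i)} {g' : G j},
    (v.filterMap (strOf Γ j)).getLast? = some (some g') →
    (v.filterMap (strOf Γ k)).getLast? = some none := by
  intro v
  induction v using List.reverseRecOn with
  | nil => intro g' hj; exact absurd hj (by simp)
  | append_singleton w l ih =>
    intro g' hj
    obtain ⟨m, a⟩ := l
    rw [List.filterMap_append] at hj ⊢
    by_cases hm : m = j
    · subst hm
      have h1 : strOf Γ k ⟨m, a⟩ = some none := strOf_nonadj (fun h2 => hk h2.symm) hadj a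
      have h2 : List.filterMap (strOf Γ k) ([⟨m, a⟩]) = ([none]) := by simp [h1]
      rw [h2, List.getLast?_concat]
    · by_cases hadj' : Γ.Adj m j
      · have hmk : m ≠ k := by
          intro h1; subst h1
          exact hadj (hadj'.symm)
        have hsj : strOf Γ j ⟨m, a⟩ = none := strOf_adj hm hadj' a
        simp only [List.filterMap_cons, List.filterMap_nil, hsj, List.append_nil] at hj
        have hw := ih hj
        by_cases hadj'' : Γ.Adj m k
        · have hsk : strOf Γ k ⟨m, a⟩ = none := strOf_adj hmk hadj'' a
          simp only [List.filterMap_cons, List.filterMap_nil, hsk, List.append_nil]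
          exact hw
        · have hsk : strOf Γ k ⟨m, a⟩ = some none := strOf_nonadj hmk hadj'' a
          simp only [List.filterMap_cons, List.filterMap_nil, hsk]
          rw [List.getLast?_concat]
      · have hsj : strOf Γ j ⟨m, a⟩ = some none := strOf_nonadj hm hadj' a
        simp only [List.filterMap_cons, List.filterMap_nil, hsj] at hj
        rw [List.getLast?_concat] at hj
        exact absurd hj (by simp)

/-- Every entry of the piling of a word with nontrivial letters is nontrivial. -/
lemma piling_entries_ne_one {u : List (Σ i, G i)} :
    (∀ l ∈ u, l.2 ≠ 1) → ∀ (k : Fin D) (x : G k), some x ∈ pilingOfWord Γ u k → x ≠ 1 := by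
  induction u using List.reverseRecOn with
  | nil => intro _ k x hx; exact absurd hx (by simp [pilingOfWord])
  | append_singleton w l ih =>
    intro hnt k x hx
    obtain ⟨m, a⟩ := l
    have hw : ∀ l ∈ w, Sigma.snd l ≠ 1 := fun l hl => hnt l (by simp [hl])
    have hwl : pilingOfWord Γ (w ++ [⟨m, a⟩]) = appendLetter Γ (pilingOfWord Γ w) m a :=
      pilingOfWord_concat w ⟨m, a⟩
    rw [hwl] at hx
    by_cases hss : ∃ g' : G m, (pilingOfWord Γ w m).getLast? = some (some g')
    · obtain ⟨g', hQ⟩ := hss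
      by_cases he : g' * a = 1
      · rw [appendLetter_cancel_apply hQ he] at hx
        split at hx
        · exact ih hw k x (List.mem_of_mem_dropLast hx)
        · exact ih hw k x hx
      · by_cases hk : k = m
        · subst hk
          rw [appendLetter_merge_self hQ he] at hx
          rcases List.mem_append.mp hx with h | h
          · exact ih hw k x (List.mem_of_mem_dropLast h)
          · obtain rfl : x = g' * a := by simpa using h
            exact he
        · rw [appendLetter_merge_ne hQ he hk] at hx
          exact ih hw k x hx
    · push_neg at hss
      by_cases hk : k = m
      · subst hk
        rw [appendLetter_push_self hss] at hx
        rcases List.mem_append.mp hx with h | h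
        · exact ih hw k x h
        · obtain rfl : x = a := by simpa using h
          exact hnt ⟨k, x⟩ (by simp)
      · rw [appendLetter_push_ne hss hk] at hx
        by_cases hadj : Γ.Adj m k
        · rw [if_neg (not_not_intro hadj)] at hx
          exact ih hw k x hx
        · rw [if_pos hadj] at hx
          rcases List.mem_append.mp hx with h | h
          · exact ih hw k x h
          · exact absurd (by simpa using h : (some x : Option (G k)) = none) (by simp)

/-- Multiplying a pushy word by one more letter which merges or cancels:
there is a pushy word for the product whose piling is the new piling. -/
lemma exists_pushy_step {j : Fin D} (g : G j) :
    ∀ v : List (Σ i, G i), Pushy Γ v → (∀ l ∈ v, l.2 ≠ 1) →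
    ∀ g' : G j, (pilingOfWord Γ v j).getLast? = some (some g') →
    ∃ v' : List (Σ i, G i), Pushy Γ v' ∧ (∀ l ∈ v', l.2 ≠ 1) ∧
      pilingOfWord Γ v' = appendLetter Γ (pilingOfWord Γ v) j g ∧
      prodOfWord Γ v' = prodOfWord Γ v * of Γ j g := by
  intro v
  induction v using List.reverseRecOn with
  | nil => intro _ _ g' hlast; exact absurd hlast (by simp [pilingOfWord])
  | append_singleton w l ih =>
    intro hv hnt g' hlast
    obtain ⟨m, a⟩ := l
    rw [pushy_concat_iff] at hv
    obtain ⟨hw, hpw⟩ := hv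
    have hntw : ∀ l ∈ w, Sigma.snd l ≠ 1 := fun l hl => hnt l (by simp [hl])
    have hntl : a ≠ 1 := hnt ⟨m, a⟩ (by simp)
    have hv_pil : pilingOfWord Γ (w ++ [⟨m, a⟩]) = appendLetter Γ (pilingOfWord Γ w) m a :=
      pilingOfWord_concat w ⟨m, a⟩
    have hv_prod : prodOfWord Γ (w ++ [⟨m, a⟩]) = prodOfWord Γ w * of Γ m a :=
      prodOfWord_concat w ⟨m, a⟩
    by_cases hm : m = j
    · subst hm
      have ha : g' = a := by
        rw [hv_pil, appendLetter_push_self hpw, List.getLast?_concat] at hlast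
        injection hlast with h1; injection h1 with h2; exact h2.symm
      subst ha
      by_cases he : g' * g = 1
      · -- cancellation: drop the last letter
        refine ⟨w, hw, hntw, ?_, ?_⟩
        · funext k
          rw [appendLetter_cancel_apply hlast he, hv_pil]
          by_cases hk : k = m
          · subst hk
            rw [if_pos (Or.inl rfl), appendLetter_push_self hpw, List.dropLast_concat]
          · rw [appendLetter_push_ne hpw hk]
            by_cases hadj : Γ.Adj m k
            · rw [if_neg (by simp [hk, hadj]), if_neg (not_not_intro hadj)]
            · rw [if_pos (Or.inr ⟨hk, hadj⟩), if_pos hadj, List.dropLast_concat]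
        · rw [hv_prod, mul_assoc, ← map_mul, he, map_one, mul_one]
      · -- merge: replace the last letter by the product
        have hw'l : pilingOfWord Γ (w ++ [⟨m, g' * g⟩]) =
            appendLetter Γ (pilingOfWord Γ w) m (g' * g) := pilingOfWord_concat w ⟨m, g' * g⟩
        have hw'p : prodOfWord Γ (w ++ [⟨m, g' * g⟩]) = prodOfWord Γ w * of Γ m (g' * g) :=
          prodOfWord_concat w ⟨m, g' * g⟩
        refine ⟨w ++ [⟨m, g' * g⟩], pushy_concat_iff.mpr ⟨hw, hpw⟩, ?_, ?_, ?_⟩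
        · intro l hl
          rcases List.mem_append.mp hl with h1 | h1
          · exact hntw l h1
          · obtain rfl : l = ⟨m, g' * g⟩ := by simpa using h1
            exact he
        · funext k
          rw [hw'l, appendLetter_merge hlast he]
          by_cases hk : k = m
          · subst hk
            rw [appendLetter_push_self hpw, setAt_self, hv_pil, appendLetter_push_self hpw,
              List.dropLast_concat]
          · rw [appendLetter_push_ne hpw hk, setAt_ne _ _ hk, hv_pil,
              appendLetter_push_ne hpw hk]
        · rw [hw'p, hv_prod, map_mul, mul_assoc]
    · -- the last letter is at a different vertex `m`
      by_cases hadj : Γ.Adj m j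
      · have hadj' : Γ.Adj j m := hadj.symm
        have hwj : (pilingOfWord Γ w j).getLast? = some (some g') := by
          rw [hv_pil, appendLetter_push_ne hpw (Ne.symm hm), if_neg (not_not_intro hadj)]
            at hlast
          exact hlast
        obtain ⟨w', hw', hnt', hpil', hprod'⟩ := ih hw hntw g' hwj
        have hwm : ∀ x : G m, (pilingOfWord Γ w' m).getLast? ≠ some (some x) := by
          by_cases hc : g' * g = 1
          · intro x hx
            rw [hpil', appendLetter_cancel_apply hwj hc, if_neg (by simp [hm, hadj'])] at hx
            exact hpw x hx
          · intro x hx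
            rw [hpil', appendLetter_merge_ne hwj hc hm] at hx
            exact hpw x hx
        have hw'l : pilingOfWord Γ (w' ++ [⟨m, a⟩]) =
            appendLetter Γ (pilingOfWord Γ w') m a := pilingOfWord_concat w' ⟨m, a⟩
        have hw'p : prodOfWord Γ (w' ++ [⟨m, a⟩]) = prodOfWord Γ w' * of Γ m a :=
          prodOfWord_concat w' ⟨m, a⟩
        refine ⟨w' ++ [⟨m, a⟩], pushy_concat_iff.mpr ⟨hw', hwm⟩, ?_, ?_, ?_⟩
        · intro l hl
          rcases List.mem_append.mp hl with h1 | h1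
          · exact hnt' l h1
          · obtain rfl : l = ⟨m, a⟩ := by simpa using h1
            exact hntl
        · funext k
          rw [hw'l]
          by_cases hc : g' * g = 1
          · rw [appendLetter_cancel_apply hlast hc]
            by_cases hk : k = m
            · subst hk
              rw [appendLetter_push_self hwm, if_neg (by simp [hm, hadj']), hpil',
                appendLetter_cancel_apply hwj hc, if_neg (by simp [hm, hadj']), hv_pil,
                appendLetter_push_self hpw]
            · rw [appendLetter_push_ne hwm hk]
              by_cases hkj : k = j
              · subst hkj
                rw [if_neg (not_not_intro hadj), hpil', appendLetter_cancel_apply hwj hc,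
                  if_pos (Or.inl rfl), if_pos (Or.inl rfl), hv_pil,
                  appendLetter_push_ne hpw (Ne.symm hm), if_neg (not_not_intro hadj)]
              · rw [hpil', appendLetter_cancel_apply hwj hc k, hv_pil,
                  appendLetter_push_ne hpw hk]
                by_cases hjk : Γ.Adj j k
                · simp [hkj, hjk]
                · have hfj : (w.filterMap (strOf Γ j)).getLast? = some (some g') := by
                    rw [← pilingOfWord_eq_filterMap hw j]; exact hwj
                  have hlastk : (pilingOfWord Γ w k).getLast? = some none := by
                    rw [pilingOfWord_eq_filterMap hw k]
                    exact filterMap_getLast_none hkj hjk hfj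
                  have hdl := dropLast_concat_of_getLast? hlastk
                  by_cases hmk : Γ.Adj m k
                  · simp [hkj, hjk, hmk]
                  · simp [hkj, hjk, hmk, List.dropLast_concat, hdl]
          · rw [appendLetter_merge hlast hc]
            by_cases hk : k = m
            · subst hk
              rw [appendLetter_push_self hwm, setAt_ne _ _ hm, hpil',
                appendLetter_merge_ne hwj hc hm, hv_pil, appendLetter_push_self hpw]
            · rw [appendLetter_push_ne hwm hk]
              by_cases hkj : k = j
              · subst hkj
                rw [if_neg (not_not_intro hadj), hpil', appendLetter_merge_self hwj hc,
                  setAt_self, hv_pil, appendLetter_push_ne hpw (Ne.symm hm),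
                  if_neg (not_not_intro hadj)]
              · rw [setAt_ne _ _ hkj, hpil', appendLetter_merge_ne hwj hc hkj, hv_pil,
                  appendLetter_push_ne hpw hk]
        · rw [hw'p, hprod', hv_prod, mul_assoc, mul_assoc, of_commute hadj']
      · -- `m` not adjacent to `j`: impossible, string `j` would end in `0`
        rw [hv_pil, appendLetter_push_ne hpw (Ne.symm hm), if_pos hadj,
          List.getLast?_concat] at hlast
        exact absurd hlast (by simp)

/-- Every word can be replaced by a pushy word with the same piling and product. -/
lemma exists_pushy : ∀ u : List (Σ i, G i), (∀ l ∈ u, l.2 ≠ 1) →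
    ∃ v : List (Σ i, G i), Pushy Γ v ∧ (∀ l ∈ v, l.2 ≠ 1) ∧
      pilingOfWord Γ v = pilingOfWord Γ u ∧ prodOfWord Γ v = prodOfWord Γ u := by
  intro u
  induction u using List.reverseRecOn with
  | nil => intro _; exact ⟨List.nil, pushy_nil, by simp, rfl, rfl⟩
  | append_singleton w l ih =>
    intro hnt
    obtain ⟨m, a⟩ := l
    obtain ⟨v, hv, hvnt, hvpil, hvprod⟩ := ih (fun l hl => hnt l (by simp [hl]))
    have hwl : pilingOfWord Γ (w ++ [⟨m, a⟩]) = appendLetter Γ (pilingOfWord Γ w) m a :=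
      pilingOfWord_concat w ⟨m, a⟩
    have hwp : prodOfWord Γ (w ++ [⟨m, a⟩]) = prodOfWord Γ w * of Γ m a :=
      prodOfWord_concat w ⟨m, a⟩
    by_cases hss : ∃ g' : G m, (pilingOfWord Γ v m).getLast? = some (some g')
    · obtain ⟨g', hg'⟩ := hss
      obtain ⟨v', h1, h2, h3, h4⟩ := exists_pushy_step a v hv hvnt g' hg'
      exact ⟨v', h1, h2, by rw [h3, hvpil, hwl], by rw [h4, hvprod, hwp]⟩
    · push_neg at hss
      have hvl : pilingOfWord Γ (v ++ [⟨m, a⟩]) = appendLetter Γ (pilingOfWord Γ v) m a :=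
        pilingOfWord_concat v ⟨m, a⟩
      have hvp : prodOfWord Γ (v ++ [⟨m, a⟩]) = prodOfWord Γ v * of Γ m a :=
        prodOfWord_concat v ⟨m, a⟩
      refine ⟨v ++ [⟨m, a⟩], pushy_concat_iff.mpr ⟨hv, hss⟩, ?_, ?_, ?_⟩
      · intro l hl
        rcases List.mem_append.mp hl with h1 | h1
        · exact hvnt l h1
        · obtain rfl : l = ⟨m, a⟩ := by simpa using h1
          exact hnt ⟨m, a⟩ (by simp)
      · rw [hvl, hvpil, hwl]
      · rw [hvp, hvprod, hwp]

/-- Every element of the graph product is the image of a word with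
nontrivial letters. -/
lemma exists_word (x : GP Γ G) :
    ∃ u : List (Σ i, G i), (∀ l ∈ u, l.2 ≠ 1) ∧ prodOfWord Γ u = x := by
  obtain ⟨y, rfl⟩ := QuotientGroup.mk'_surjective (Subgroup.normalClosure (Rels Γ G)) x
  induction y using Monoid.CoprodI.induction_on with
  | one => exact ⟨List.nil, by simp, by simp [prodOfWord]⟩
  | of i m =>
    by_cases hm : m = 1
    · subst hm
      exact ⟨List.nil, by simp, by simp [prodOfWord]⟩
    · exact ⟨[⟨i, m⟩], by simpa using hm, by simp [prodOfWord, of]⟩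
  | mul x y ihx ihy =>
    obtain ⟨u1, h1, e1⟩ := ihx
    obtain ⟨u2, h2, e2⟩ := ihy
    refine ⟨u1 ++ u2, ?_, ?_⟩
    · intro l hl
      rcases List.mem_append.mp hl with h' | h'
      · exact h1 l h'
      · exact h2 l h'
    · rw [prodOfWord_append, e1, e2, map_mul]

/-- Key concatenation lemma: appending a pushy word to a piling `P` whose
terminal clique avoids the initial clique of the word's piling just
concatenates componentwise. -/
lemma foldl_piling_append {P : PilingT G}
    (hP : ∀ (k : Fin D) (x : G k), (P k).getLast? = some (some x) → x ≠ 1) :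
    ∀ v : List (Σ i, G i), Pushy Γ v → (∀ l ∈ v, l.2 ≠ 1) →
      termClique P ∩ initClique (pilingOfWord Γ v) = ∅ →
      List.foldl (fun Q (l : Σ i, G i) => appendLetter Γ Q l.1 l.2) P v
        = fun k => P k ++ pilingOfWord Γ v k := by
  intro v
  induction v using List.reverseRecOn with
  | nil => intro _ _ _; funext k; simp [pilingOfWord]
  | append_singleton w l ih =>
    intro hv hnt hd
    obtain ⟨m, a⟩ := l
    rw [pushy_concat_iff] at hv
    have hntw : ∀ l ∈ w, Sigma.snd l ≠ 1 := fun l hl => hnt l (by simp [hl])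
    have hwl : pilingOfWord Γ (w ++ [⟨m, a⟩]) = appendLetter Γ (pilingOfWord Γ w) m a :=
      pilingOfWord_concat w ⟨m, a⟩
    have hinit : initClique (pilingOfWord Γ w) ⊆
        initClique (pilingOfWord Γ (w ++ [⟨m, a⟩])) := by
      rintro i ⟨x, hx1, hx2⟩
      refine ⟨x, hx1, ?_⟩
      have hne : pilingOfWord Γ w i ≠ [] := by
        intro h0; rw [h0] at hx2; exact absurd hx2 (by simp)
      rw [hwl]
      by_cases hk : i = m
      · subst hk
        rw [appendLetter_push_self hv.2, List.head?_append_of_ne_nil _ hne]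
        exact hx2
      · rw [appendLetter_push_ne hv.2 hk]
        by_cases hadj : Γ.Adj m i
        · rw [if_neg (not_not_intro hadj)]; exact hx2
        · rw [if_pos hadj, List.head?_append_of_ne_nil _ hne]; exact hx2
    have hd' : termClique P ∩ initClique (pilingOfWord Γ w) = ∅ := by
      rw [Set.eq_empty_iff_forall_notMem]
      intro i hi
      have h2 : i ∈ termClique P ∩ initClique (pilingOfWord Γ (w ++ [⟨m, a⟩])) :=
        ⟨hi.1, hinit hi.2⟩
      rw [hd] at h2
      simpa using h2
    simp only [List.foldl_append, List.foldl_cons, List.foldl_nil]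
    rw [ih hv.1 hntw hd', hwl]
    have hlastP' : ∀ x : G m,
        ((fun k => P k ++ pilingOfWord Γ w k) m).getLast? ≠ some (some x) := by
      by_cases hwm : pilingOfWord Γ w m = []
      · have hm' : m ∉ termClique P := by
          intro hmem
          have hinit_m : m ∈ initClique (pilingOfWord Γ (w ++ [⟨m, a⟩])) := by
            refine ⟨a, hnt ⟨m, a⟩ (by simp), ?_⟩
            rw [hwl, appendLetter_push_self hv.2, hwm]
            simp
          have h2 : m ∈ termClique P ∩ initClique (pilingOfWord Γ (w ++ [⟨m, a⟩])) :=
            ⟨hmem, hinit_m⟩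
          rw [hd] at h2
          simpa using h2
        intro x hx
        simp only [hwm, List.append_nil] at hx
        exact hm' ⟨x, hP m x hx, hx⟩
      · intro x hx
        simp only [] at hx
        rw [List.getLast?_append_of_ne_nil _ hwm] at hx
        exact hv.2 x hx
    rw [appendLetter_push hlastP']
    funext k
    by_cases hk : k = m
    · subst hk
      rw [setAt_self, appendLetter_push_self hv.2]
      simp [List.append_assoc]
    · rw [setAt_ne _ _ hk, appendLetter_push_ne hv.2 hk]
      by_cases hadj : Γ.Adj m k
      · rw [if_neg (by simp [hadj]), if_neg (not_not_intro hadj)]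
      · rw [if_pos ⟨hk, hadj⟩, if_pos hadj]
        simp [List.append_assoc]


end Aux

/-- If `term(g) ∩ init(h) = ∅` then `Π(gh)` is the
componentwise concatenation `Π(g)Π(h)`. -/
theorem piling_mul_of_disjoint {D : ℕ} (Γ : SimpleGraph (Fin D))
    (G : Fin D → Type*) [∀ i, Group (G i)]
    (Pi : GP Γ G → PilingT G)
    (hPi : ∀ u : List (Σ i, G i), (∀ l ∈ u, l.2 ≠ 1) →
      Pi (prodOfWord Γ u) = pilingOfWord Γ u)
    (g h : GP Γ G)
    (hdisj : termClique (Pi g) ∩ initClique (Pi h) = ∅) :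
    Pi (g * h) = fun i => Pi g i ++ Pi h i := by
  obtain ⟨u, hu, hug⟩ := exists_word g
  obtain ⟨v0, hv0, hvh⟩ := exists_word h
  obtain ⟨v, hvp, hvnt, hvpil, hvprod⟩ := exists_pushy v0 hv0
  have hPg : Pi g = pilingOfWord Γ u := by rw [← hug]; exact hPi u hu
  have hPh : Pi h = pilingOfWord Γ v := by
    rw [← hvh, ← hvprod]
    exact hPi v hvnt
  have huv : ∀ l ∈ u ++ v, Sigma.snd l ≠ 1 := by
    intro l hl
    rcases List.mem_append.mp hl with h' | h'
    · exact hu l h'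
    · exact hvnt l h'
  have hgh : Pi (g * h) = pilingOfWord Γ (u ++ v) := by
    have he : prodOfWord Γ (u ++ v) = g * h := by
      rw [prodOfWord_append, hug, hvprod, hvh]
    rw [← he]
    exact hPi _ huv
  have hfold : pilingOfWord Γ (u ++ v) =
      List.foldl (fun Q (l : Σ i, G i) => appendLetter Γ Q l.1 l.2) (pilingOfWord Γ u) v := by
    unfold pilingOfWord
    rw [List.foldl_append]
  have hPlast : ∀ (k : Fin D) (x : G k),
      (pilingOfWord Γ u k).getLast? = some (some x) → x ≠ 1 := by
    intro k x hx
    apply piling_entries_ne_one hu k x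
    have h1 := dropLast_concat_of_getLast? hx
    rw [← h1]
    simp
  have hdisj' : termClique (pilingOfWord Γ u) ∩ initClique (pilingOfWord Γ v) = ∅ := by
    rw [← hPg, ← hPh]
    exact hdisj
  rw [hgh, hfold, foldl_piling_append hPlast v hvp hvnt hdisj', hPg, hPh]

end GraphProductDrift
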